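/- Let N ≥ 2 be an integer, let β be a unit in the ring Z/NZ, and let m = ord_N(β) be the multiplicative order of β. Then the following are equivalent: (i) for every prime p dividing N, the image of β in Z/pZ has multiplicative order exactly m; (ii) for every prime r dividing m, the element β^(m/r) − 1 is a unit in Z/NZ (equivalently, gcd(b − 1, N) = 1 where b ∈ [0, N) is the integer representing β^(m/r)). -/
import Mathlib

lemma zmod_isUnit_iff_forall_prime (N : ℕ) (hN : 2 ≤ N) (x : ZMod N) :
    IsUnit x ↔ ∀ (p : ℕ) (hp : p.Prime) (hpN : p ∣ N),
      ZMod.castHom hpN (ZMod p) x ≠ 0 := by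
  haveI : NeZero N := ⟨by omega⟩
  have hx : x = (x.val : ZMod N) := (ZMod.natCast_zmod_val x).symm
  constructor
  · intro hu p hp hpN h0
    haveI := Fact.mk hp
    have hu2 : IsUnit (ZMod.castHom hpN (ZMod p) x) := hu.map _
    rw [h0] at hu2
    exact hu2.ne_zero rfl
  · intro h
    rw [hx, ZMod.isUnit_iff_coprime]
    by_contra hc
    obtain ⟨p, hp, hpa, hpN⟩ := Nat.Prime.not_coprime_iff_dvd.mp hc
    refine h p hp hpN ?_
    have : ZMod.castHom hpN (ZMod p) x = (x.val : ZMod p) := by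
      rw [ZMod.castHom_apply, ← ZMod.natCast_val]
    rw [this, ZMod.natCast_eq_zero_iff]
    exact hpa

theorem order_eq_mod_all_primes_iff_isUnit (N : ℕ) (hN : 2 ≤ N) (β : (ZMod N)ˣ)
    (m : ℕ) (hm : m = orderOf β) :
    (∀ (p : ℕ) (_ : p.Prime) (hpN : p ∣ N),
        orderOf (ZMod.castHom hpN (ZMod p) (β : ZMod N)) = m) ↔
      (∀ r : ℕ, r.Prime → r ∣ m → IsUnit ((β : ZMod N) ^ (m / r) - 1)) := by
  haveI : NeZero N := ⟨by omega⟩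
  have hm0 : 0 < m := by rw [hm]; exact orderOf_pos β
  have hβm : (β : ZMod N) ^ m = 1 := by
    have h1 : β ^ m = 1 := by rw [hm]; exact pow_orderOf_eq_one β
    have := congrArg (Units.val) h1
    simpa using this
  constructor
  · intro h r hr hrm
    rw [zmod_isUnit_iff_forall_prime N hN]
    intro p hp hpN h0
    have key : ZMod.castHom hpN (ZMod p) ((β : ZMod N)) ^ (m / r) = 1 := by
      rw [map_sub, map_pow, map_one, sub_eq_zero] at h0
      exact h0
    have hdvd : orderOf (ZMod.castHom hpN (ZMod p) (β : ZMod N)) ∣ m / r :=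
      orderOf_dvd_of_pow_eq_one key
    rw [h p hp hpN] at hdvd
    have hlt : m / r < m := Nat.div_lt_self hm0 hr.one_lt
    have hpos : 0 < m / r := Nat.div_pos (Nat.le_of_dvd hm0 hrm) hr.pos
    exact absurd (Nat.le_of_dvd hpos hdvd) (by omega)
  · intro h p hp hpN
    set b := ZMod.castHom hpN (ZMod p) (β : ZMod N) with hb
    have hdvd : orderOf b ∣ m := by
      apply orderOf_dvd_of_pow_eq_one
      rw [hb, ← map_pow, hβm, map_one]
    by_contra hne
    have hlt : orderOf b < m := lt_of_le_of_ne (Nat.le_of_dvd hm0 hdvd) hne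
    obtain ⟨k, hk⟩ := hdvd
    have hk1 : 1 < k := by
      rcases Nat.lt_or_ge k 2 with h2 | h2
      · interval_cases k <;> omega
      · omega
    obtain ⟨r, hr, hrk⟩ := Nat.exists_prime_and_dvd (by omega : k ≠ 1)
    have hrm : r ∣ m := hk ▸ hrk.mul_left _
    have hdvd2 : orderOf b ∣ m / r := by
      obtain ⟨k', hk'⟩ := hrk
      refine ⟨k', ?_⟩
      rw [hk, hk', Nat.mul_comm r k', ← Nat.mul_assoc, Nat.mul_div_cancel _ hr.pos]
    have hbone : b ^ (m / r) = 1 := orderOf_dvd_iff_pow_eq_one.mp hdvd2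
    haveI := Fact.mk hp
    have hu2 := (h r hr hrm).map (ZMod.castHom hpN (ZMod p))
    rw [map_sub, map_pow, map_one, ← hb, hbone, sub_self] at hu2
    exact hu2.ne_zero rfl
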